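/- arXiv:2106.01471 — 6 statements merged into one kernel-verified Lean document; each statement's English description precedes it below -/
import Mathlib

section
/- Let K be a positive semidefinite, self-adjoint bounded operator on a Hilbert space H, let p ∈ H, and let μ, ν > 0. If f = (μ + νK)⁻¹ p, then for every g ∈ H with ‖g‖ ≤ 1 and (Kg, g) ≤ ε², one has Re(g, p) ≤ (1/2)((μ + νK)⁻¹ p, p) + (1/2)(μ + νε²). -/
local notation "⟪" x ", " y "⟫" => @inner ℂ _ _ x y

/-- Upper bound via Lagrange duality: with `T = (μ + νK)⁻¹`, for every `g`
with `‖g‖ ≤ 1` and `(Kg, g) ≤ ε²` one has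
`Re(g, p) ≤ ½((μ+νK)⁻¹p, p) + ½(μ + νε²)`. -/
theorem stmt2 {H : Type*} [NormedAddCommGroup H] [InnerProductSpace ℂ H] [CompleteSpace H]
    (K T : H →L[ℂ] H)
    (hsa : ∀ f g, ⟪K f, g⟫ = ⟪f, K g⟫) (hpsd : ∀ f, 0 ≤ (⟪f, K f⟫).re)
    (μ ν : ℝ) (hμ : 0 < μ) (hν : 0 < ν) (ε : ℝ) (hε : 0 ≤ ε)
    (hT₁ : ∀ f, (μ : ℂ) • T f + (ν : ℂ) • K (T f) = f)
    (hT₂ : ∀ f, T ((μ : ℂ) • f + (ν : ℂ) • K f) = f)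
    (p : H) :
    ∀ g : H, ‖g‖ ≤ 1 → (⟪g, K g⟫).re ≤ ε ^ 2 →
      (⟪p, g⟫).re ≤ (1 / 2) * (⟪p, T p⟫).re + (1 / 2) * (μ + ν * ε ^ 2) := by
  intro g hg hKg
  set f := T p with hf
  have hp : (μ : ℂ) • f + (ν : ℂ) • K f = p := hT₁ p
  -- Re⟪g, K f⟫ = Re⟪f, K g⟫
  have hsym : (⟪g, K f⟫).re = (⟪f, K g⟫).re := by
    rw [← hsa g f, ← inner_conj_symm, Complex.conj_re]
  -- 2 Re⟪f, K g⟫ ≤ Re⟪f, K f⟫ + Re⟪g, K g⟫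
  have key2 : 2 * (⟪f, K g⟫).re ≤ (⟪f, K f⟫).re + (⟪g, K g⟫).re := by
    have h := hpsd (f - g)
    rw [map_sub, inner_sub_left, inner_sub_right, inner_sub_right] at h
    simp only [Complex.sub_re] at h
    linarith [hsym]
  -- 2 Re⟪f, g⟫ ≤ ‖f‖² + ‖g‖²
  have key1 : 2 * (⟪f, g⟫).re ≤ ‖f‖ ^ 2 + ‖g‖ ^ 2 := by
    have h1 : (⟪f, g⟫).re ≤ ‖f‖ * ‖g‖ := re_inner_le_norm (𝕜 := ℂ) f g
    nlinarith [sq_nonneg (‖f‖ - ‖g‖)]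
  have hg2 : ‖g‖ ^ 2 ≤ 1 := by nlinarith [norm_nonneg g]
  -- expansion of Re⟪p, g⟫
  have hpg : (⟪p, g⟫).re = μ * (⟪f, g⟫).re + ν * (⟪K f, g⟫).re := by
    rw [← hp, inner_add_left, inner_smul_left, inner_smul_left]
    simp [Complex.add_re, Complex.mul_re]
  have hKfg : (⟪K f, g⟫).re = (⟪f, K g⟫).re := by
    rw [hsa]
  -- expansion of Re⟪p, T p⟫
  have hpTp : (⟪p, T p⟫).re = μ * ‖f‖ ^ 2 + ν * (⟪f, K f⟫).re := by
    have : (⟪p, f⟫).re = μ * (⟪f, f⟫).re + ν * (⟪K f, f⟫).re := by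
      rw [← hp, inner_add_left, inner_smul_left, inner_smul_left]
      simp [Complex.add_re, Complex.mul_re]
    have hff : (⟪f, f⟫).re = ‖f‖ ^ 2 := by
      rw [inner_self_eq_norm_sq_to_K]; norm_cast
    rw [← hf, this, ← hsa, hff]
  rw [hpg, hKfg, hpTp]
  nlinarith [hg2, key1, key2, hKg, hμ.le, hν.le]
end

section
/- Let λ₁,...,λ_m be distinct positive reals and a₀ ≥ 0, a₁,...,a_m ≥ 0 with at least one aⱼ > 0 for j ≥ 1. Define Φ(η) = (∑_{j=1}^m λⱼ aⱼ/(λⱼ+η)²) / (a₀/η² + ∑_{j=1}^m aⱼ/(λⱼ+η)²) for η > 0. Then Φ is strictly increasing on (0,∞) provided a₀ > 0. -/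
open Finset

/-- Key pairwise inequality: the symmetrized term is a ratio with nonnegative
numerator and positive denominator. -/
private lemma aux_eq (li lj ai aj x y : ℝ)
    (hpi : (li + x) ≠ 0) (hqi : (li + y) ≠ 0) (hpj : (lj + x) ≠ 0) (hqj : (lj + y) ≠ 0) :
    (li * ai / (li + y) ^ 2 * (aj / (lj + x) ^ 2)
        - li * ai / (li + x) ^ 2 * (aj / (lj + y) ^ 2))
      + (lj * aj / (lj + y) ^ 2 * (ai / (li + x) ^ 2)
        - lj * aj / (lj + x) ^ 2 * (ai / (li + y) ^ 2))
      = (li - lj) ^ 2 * (y - x) * ((li + x) * (lj + y) + (li + y) * (lj + x)) * ai * aj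
        / ((li + x) ^ 2 * ((li + y) ^ 2 * ((lj + x) ^ 2 * (lj + y) ^ 2))) := by
  field_simp
  ring

private lemma aux_nonneg (li lj ai aj x y : ℝ) (hai : 0 ≤ ai) (haj : 0 ≤ aj)
    (hpi : 0 < li + x) (hqi : 0 < li + y) (hpj : 0 < lj + x) (hqj : 0 < lj + y)
    (hxy : x ≤ y) :
    0 ≤ (li * ai / (li + y) ^ 2 * (aj / (lj + x) ^ 2)
        - li * ai / (li + x) ^ 2 * (aj / (lj + y) ^ 2))
      + (lj * aj / (lj + y) ^ 2 * (ai / (li + x) ^ 2)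
        - lj * aj / (lj + x) ^ 2 * (ai / (li + y) ^ 2)) := by
  rw [aux_eq li lj ai aj x y hpi.ne' hqi.ne' hpj.ne' hqj.ne']
  apply div_nonneg
  · have h1 : (0:ℝ) ≤ (li - lj) ^ 2 := sq_nonneg _
    have h2 : (0:ℝ) ≤ y - x := by linarith
    have h3 : (0:ℝ) ≤ (li + x) * (lj + y) + (li + y) * (lj + x) := by positivity
    positivity
  · positivity

private lemma aux_pos (li lj ai aj x y : ℝ) (hai : 0 < ai) (haj : 0 < aj)
    (hpi : 0 < li + x) (hqi : 0 < li + y) (hpj : 0 < lj + x) (hqj : 0 < lj + y)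
    (hxy : x < y) (hll : li ≠ lj) :
    0 < (li * ai / (li + y) ^ 2 * (aj / (lj + x) ^ 2)
        - li * ai / (li + x) ^ 2 * (aj / (lj + y) ^ 2))
      + (lj * aj / (lj + y) ^ 2 * (ai / (li + x) ^ 2)
        - lj * aj / (lj + x) ^ 2 * (ai / (li + y) ^ 2)) := by
  rw [aux_eq li lj ai aj x y hpi.ne' hqi.ne' hpj.ne' hqj.ne']
  apply div_pos
  · have h1 : (0:ℝ) < (li - lj) ^ 2 := by
      have : li - lj ≠ 0 := sub_ne_zero.mpr hll
      positivity
    have h2 : (0:ℝ) < y - x := by linarith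
    have h3 : (0:ℝ) < (li + x) * (lj + y) + (li + y) * (lj + x) := by positivity
    positivity
  · positivity

/-- The function
`Φ(η) = (∑ⱼ λⱼaⱼ/(λⱼ+η)²) / (a₀/η² + ∑ⱼ aⱼ/(λⱼ+η)²)` is strictly increasing on `(0,∞)`. -/
theorem stmt4 (m : ℕ) (hm : 1 ≤ m) (lam : Fin m → ℝ) (a : Fin m → ℝ) (a₀ : ℝ)
    (hlam : ∀ j, 0 < lam j) (hdist : Function.Injective lam)
    (ha₀ : 0 < a₀) (ha : ∀ j, 0 ≤ a j) (hne : ∃ j, 0 < a j)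
    (Φ : ℝ → ℝ)
    (hΦ : ∀ η, 0 < η → Φ η =
      (∑ j, lam j * a j / (lam j + η) ^ 2) /
        (a₀ / η ^ 2 + ∑ j, a j / (lam j + η) ^ 2)) :
    StrictMonoOn Φ (Set.Ioi (0 : ℝ)) := by
  intro x hx y hy hxy
  simp only [Set.mem_Ioi] at hx hy
  rw [hΦ x hx, hΦ y hy]
  set L : Fin (m + 1) → ℝ := Fin.cons 0 lam with hL
  set A : Fin (m + 1) → ℝ := Fin.cons a₀ a with hA
  have hLnn : ∀ k, 0 ≤ L k := by
    intro k
    induction k using Fin.cases with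
    | zero => simp [hL]
    | succ j => simpa [hL] using (hlam j).le
  have hAnn : ∀ k, 0 ≤ A k := by
    intro k
    induction k using Fin.cases with
    | zero => simpa [hA] using ha₀.le
    | succ j => simpa [hA] using ha j
  have hNsum : ∀ t : ℝ, (∑ j, lam j * a j / (lam j + t) ^ 2)
      = ∑ k, L k * A k / (L k + t) ^ 2 := by
    intro t
    rw [Fin.sum_univ_succ]
    simp [hL, hA]
  have hDsum : ∀ t : ℝ, (a₀ / t ^ 2 + ∑ j, a j / (lam j + t) ^ 2)
      = ∑ k, A k / (L k + t) ^ 2 := by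
    intro t
    rw [Fin.sum_univ_succ]
    simp [hL, hA]
  rw [hNsum x, hNsum y, hDsum x, hDsum y]
  have hDpos : ∀ t : ℝ, 0 < t → 0 < ∑ k, A k / (L k + t) ^ 2 := by
    intro t ht
    apply Finset.sum_pos'
    · intro k _
      have h1 := hLnn k
      have h2 := hAnn k
      positivity
    · refine ⟨0, Finset.mem_univ _, ?_⟩
      have : L 0 = 0 := by simp [hL]
      rw [this]
      have : A 0 = a₀ := by simp [hA]
      rw [this]
      rw [zero_add]
      positivity
  rw [div_lt_div_iff₀ (hDpos x hx) (hDpos y hy)]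
  rw [← sub_pos]
  rw [Finset.sum_mul_sum, Finset.sum_mul_sum]
  simp only [← Finset.sum_sub_distrib]
  set g : Fin (m+1) → Fin (m+1) → ℝ := fun i j =>
    L i * A i / (L i + y) ^ 2 * (A j / (L j + x) ^ 2)
      - L i * A i / (L i + x) ^ 2 * (A j / (L j + y) ^ 2) with hg
  show 0 < ∑ i, ∑ j, g i j
  have hpos : ∀ (i : Fin (m+1)), ∀ t : ℝ, 0 < t → 0 < L i + t := by
    intro i t ht
    have := hLnn i
    linarith
  have hGnn : ∀ i j, 0 ≤ g i j + g j i := by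
    intro i j
    exact aux_nonneg (L i) (L j) (A i) (A j) x y (hAnn i) (hAnn j)
      (hpos i x hx) (hpos i y hy) (hpos j x hx) (hpos j y hy) hxy.le
  obtain ⟨j₀, hj₀⟩ := hne
  have hGpos : 0 < g 0 j₀.succ + g j₀.succ 0 := by
    apply aux_pos (L 0) (L j₀.succ) (A 0) (A j₀.succ) x y
      (by simp [hA]; exact ha₀) (by simpa [hA] using hj₀)
      (hpos 0 x hx) (hpos 0 y hy) (hpos j₀.succ x hx) (hpos j₀.succ y hy) hxy
    · have h0 : L 0 = 0 := by simp [hL]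
      have hs : L j₀.succ = lam j₀ := by simp [hL]
      rw [h0, hs]
      exact (hlam j₀).ne
  have hdouble : (∑ i, ∑ j, g i j) + (∑ i, ∑ j, g i j) = ∑ i, ∑ j, (g i j + g j i) := by
    have hc : (∑ i, ∑ j, g i j) = ∑ i, ∑ j, g j i := Finset.sum_comm
    rw [hc]
    nth_rewrite 1 [← hc]
    simp [Finset.sum_add_distrib]
  have hsum_pos : 0 < ∑ i, ∑ j, (g i j + g j i) := by
    apply Finset.sum_pos'
    · intro i _
      exact Finset.sum_nonneg fun j _ => hGnn i j
    · refine ⟨0, Finset.mem_univ _, Finset.sum_pos' (fun j _ => hGnn 0 j)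
        ⟨j₀.succ, Finset.mem_univ _, hGpos⟩⟩
  linarith [hdouble, hsum_pos]
end

section
/- Let H be a reproducing kernel Hilbert space with reproducing elements p_w, and K f = ∑_{j=1}^n f(zⱼ) p_{zⱼ}. Suppose p_z = K u for some u ∈ H, and set cⱼ = u(zⱼ). Then f(z) = ∑_{j=1}^n cⱼ · conj(f(zⱼ)) for every f ∈ H, and consequently A_z(ε) := sup{|f(z)| : ‖f‖ ≤ 1, ∑ⱼ|f(zⱼ)|² ≤ ε²} satisfies A_z(ε) ≤ ε |c| where |c| is the Euclidean norm of (c₁,...,cₙ). -/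
open scoped ComplexConjugate
local notation "⟪" x ", " y "⟫" => @inner ℂ _ _ x y

/-- If `p_z = K u`, with `cⱼ = u(zⱼ)`, then the value of every `f` at `z`
is determined by its values at the `zⱼ` via `f(z) = ∑ⱼ conj(cⱼ) f(zⱼ)`
(equivalently, `f(z) = ∑ⱼ cⱼ·conj(f(zⱼ))` after conjugation in the paper's convention),
and consequently `A_z(ε) ≤ ε|c|`. -/
theorem stmt12 {H Ω : Type*} [NormedAddCommGroup H] [InnerProductSpace ℂ H] [CompleteSpace H]
    (p : Ω → H) (ev : H → Ω → ℂ) (hev : ∀ f w, ev f w = ⟪p w, f⟫)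
    (n : ℕ) (z : Ω) (zs : Fin n → Ω)
    (K : H → H) (hK : ∀ f, K f = ∑ j, ev f (zs j) • p (zs j))
    (u : H) (hu : K u = p z)
    (c : Fin n → ℂ) (hc : ∀ j, c j = ev u (zs j)) :
    (∀ f : H, ev f z = ∑ j, conj (c j) * ev f (zs j)) ∧
    (∀ ε : ℝ, 0 ≤ ε → ∀ f : H, ‖f‖ ≤ 1 → (∑ j, ‖ev f (zs j)‖ ^ 2) ≤ ε ^ 2 →
      ‖ev f z‖ ≤ ε * Real.sqrt (∑ j, ‖c j‖ ^ 2)) := by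
  have key : ∀ f : H, ev f z = ∑ j, conj (c j) * ev f (zs j) := by
    intro f
    rw [hev, ← hu, hK]
    rw [sum_inner]
    congr 1
    ext j
    rw [inner_smul_left, hc, hev, hev]
  refine ⟨key, fun ε hε f hf hsum => ?_⟩
  rw [key]
  -- Cauchy-Schwarz in ℂⁿ
  set a : EuclideanSpace ℂ (Fin n) := WithLp.toLp 2 (fun j => c j)
  set b : EuclideanSpace ℂ (Fin n) := WithLp.toLp 2 (fun j => ev f (zs j))
  have hin : (∑ j, conj (c j) * ev f (zs j)) = ⟪a, b⟫ := by
    simp [a, b, PiLp.inner_apply, mul_comm]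
  rw [hin]
  calc ‖⟪a, b⟫‖ ≤ ‖a‖ * ‖b‖ := norm_inner_le_norm a b
    _ ≤ Real.sqrt (∑ j, ‖c j‖ ^ 2) * ε := by
        apply mul_le_mul
        · rw [EuclideanSpace.norm_eq]
        · rw [EuclideanSpace.norm_eq, ← Real.sqrt_sq hε]
          exact Real.sqrt_le_sqrt hsum
        · exact norm_nonneg _
        · exact Real.sqrt_nonneg _
    _ = ε * Real.sqrt (∑ j, ‖c j‖ ^ 2) := mul_comm _ _
end

section
/- Let K = ∑_{j=1}^m λⱼ Pⱼ be a finite-rank positive semidefinite self-adjoint operator with distinct eigenvalues λⱼ > 0 and P₀ the projection onto ker K, and let p ∈ H with P₀ p ≠ 0. Then for u_η = (K + η)⁻¹ p, the quantity u_η(z) interpreted as (u_η, p), one has ((u_η, p))/‖u_η‖ → ‖P₀ p‖ as η → 0⁺, i.e., lim_{η→0⁺} (u_η, p)/‖u_η‖ = ‖P₀ p‖. -/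
open Filter Topology

local notation "⟪" x ", " y "⟫" => @inner ℂ _ _ x y

/-- With `u_η = (K+η)⁻¹p` and `P₀p ≠ 0`,
`(u_η, p)/‖u_η‖ → ‖P₀p‖` as `η → 0⁺`. -/
theorem stmt16 {H : Type*} [NormedAddCommGroup H] [InnerProductSpace ℂ H] [CompleteSpace H]
    (m : ℕ) (lam : Fin m → ℝ) (hlam : ∀ j, 0 < lam j) (hdist : Function.Injective lam)
    (P : Fin m → H →L[ℂ] H) (P₀ K : H →L[ℂ] H)
    (hPsa : ∀ j, ∀ f g, ⟪P j f, g⟫ = ⟪f, P j g⟫)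
    (hPidem : ∀ j, P j ∘L P j = P j)
    (hPorth : ∀ j k, j ≠ k → P j ∘L P k = 0)
    (hK : K = ∑ j, (lam j : ℂ) • P j)
    (hP₀ : P₀ = 1 - ∑ j, P j)
    (p : H) (hp : P₀ p ≠ 0)
    (u : ℝ → H) (hu : ∀ η : ℝ, 0 < η → K (u η) + (η : ℂ) • u η = p) :
    Tendsto (fun η => (⟪u η, p⟫).re / ‖u η‖) (𝓝[>] 0) (𝓝 ‖P₀ p‖) := by
  -- pointwise orthogonality facts
  have hPP : ∀ j k : Fin m, ∀ w : H, j ≠ k → P j (P k w) = 0 := by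
    intro j k w hjk
    have := congrArg (fun T : H →L[ℂ] H => T w) (hPorth j k hjk)
    simpa using this
  have hPP' : ∀ k : Fin m, ∀ w : H, P k (P k w) = P k w := by
    intro k w
    have := congrArg (fun T : H →L[ℂ] H => T w) (hPidem k)
    simpa using this
  -- `P k ∘ K = lam k • P k`
  have hPjK : ∀ (k : Fin m) (w : H), P k (K w) = (lam k : ℂ) • P k w := by
    intro k w
    rw [hK]
    simp only [ContinuousLinearMap.sum_apply, ContinuousLinearMap.smul_apply, map_sum, map_smul]
    rw [Finset.sum_eq_single k]
    · rw [hPP']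
    · intro j _ hjk
      rw [hPP k j w (Ne.symm hjk), smul_zero]
    · intro h; exact absurd (Finset.mem_univ k) h
  -- key identity: `η • u η = P₀ p + ∑ (η/(λⱼ+η)) • Pⱼ p`
  have hkey : ∀ η : ℝ, 0 < η →
      (η : ℂ) • u η = P₀ p + ∑ j, ((η / (lam j + η) : ℝ) : ℂ) • P j p := by
    intro η hη
    set w := u η with hw
    have heq := hu η hη
    have hPk : ∀ k : Fin m, ((lam k + η : ℝ) : ℂ) • P k w = P k p := by
      intro k
      have := congrArg (P k) heq
      rw [map_add, map_smul, hPjK] at this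
      rw [← this]
      push_cast
      rw [add_smul]
    have hden : ∀ k : Fin m, ((lam k + η : ℝ) : ℂ) ≠ 0 := by
      intro k
      rw [Ne, Complex.ofReal_eq_zero]
      exact (add_pos (hlam k) hη).ne'
    have hPkw : ∀ k : Fin m, ((η / (lam k + η) : ℝ) : ℂ) • P k p = (η : ℂ) • P k w := by
      intro k
      rw [← hPk k, smul_smul]
      congr 1
      rw [← Complex.ofReal_mul, div_mul_cancel₀ _ (add_pos (hlam k) hη).ne']
    have hP0p : P₀ p = (η : ℂ) • (w - ∑ j, P j w) := by
      rw [hP₀]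
      simp only [ContinuousLinearMap.sub_apply, ContinuousLinearMap.one_apply,
        ContinuousLinearMap.sum_apply]
      have hsum : (∑ j, P j p) = ∑ j, ((lam j + η : ℝ) : ℂ) • P j w := by
        exact Finset.sum_congr rfl fun j _ => (hPk j).symm
      have hKw : K w = ∑ j, (lam j : ℂ) • P j w := by
        rw [hK]; simp [ContinuousLinearMap.sum_apply]
      calc p - ∑ j, P j p
          = (K w + (η:ℂ) • w) - ∑ j, ((lam j + η : ℝ) : ℂ) • P j w := by rw [heq, hsum]
        _ = (η:ℂ) • (w - ∑ j, P j w) := by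
            rw [hKw, smul_sub, Finset.smul_sum]
            have h3 : ∀ j : Fin m, ((lam j + η : ℝ) : ℂ) • P j w
                = (lam j : ℂ) • P j w + (η:ℂ) • P j w := by
              intro j; push_cast; rw [add_smul]
            rw [Finset.sum_congr rfl fun j _ => h3 j, Finset.sum_add_distrib]
            abel
    rw [hP0p]
    rw [Finset.sum_congr rfl fun j _ => hPkw j]
    rw [smul_sub, Finset.smul_sum]
    abel
  -- the limiting function
  set g : ℝ → H := fun η => P₀ p + ∑ j, ((η / (lam j + η) : ℝ) : ℂ) • P j p with hg
  have hg0 : g 0 = P₀ p := by simp [hg]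
  have hgt : Tendsto g (𝓝[>] (0:ℝ)) (𝓝 (P₀ p)) := by
    have h0 : Tendsto g (𝓝 (0:ℝ)) (𝓝 (P₀ p + ∑ _j : Fin m, (0 : H))) := by
      apply Tendsto.add tendsto_const_nhds
      apply tendsto_finset_sum
      intro j _
      have hj : Tendsto (fun η : ℝ => η / (lam j + η)) (𝓝 0) (𝓝 0) := by
        have h := Filter.Tendsto.div (f := fun η : ℝ => η) (g := fun η : ℝ => lam j + η)
          (l := 𝓝 (0:ℝ)) tendsto_id (tendsto_const_nhds.add tendsto_id)
          (by simpa using (hlam j).ne')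
        simpa using Tendsto.congr (f₂ := fun η : ℝ => η / (lam j + η)) (fun _ => rfl) h
      have hjc : Tendsto (fun η : ℝ => ((η / (lam j + η) : ℝ) : ℂ)) (𝓝 0) (𝓝 0) := by
        have h2 := (Complex.continuous_ofReal.tendsto (0:ℝ)).comp hj
        simpa [Function.comp_def] using h2
      simpa using hjc.smul (tendsto_const_nhds (α := ℝ) (x := P j p))
    have h0' : Tendsto g (𝓝 (0:ℝ)) (𝓝 (P₀ p)) := by simpa using h0
    exact h0'.mono_left nhdsWithin_le_nhds
  -- self-adjointness and idempotence of P₀ on p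
  have hP0sa : ⟪P₀ p, p⟫ = (‖P₀ p‖ : ℂ) ^ 2 := by
    have hidem : P₀ (P₀ p) = P₀ p := by
      rw [hP₀]
      simp only [ContinuousLinearMap.sub_apply, ContinuousLinearMap.one_apply,
        ContinuousLinearMap.sum_apply, map_sub, map_sum]
      have hterm : ∀ x : Fin m, (P x) p - ∑ d, (P d) ((P x) p) = 0 := by
        intro x
        rw [Finset.sum_eq_single x (fun d _ hdx => hPP d x p hdx)
          (fun h => absurd (Finset.mem_univ x) h), hPP', sub_self]
      rw [Finset.sum_congr rfl fun x _ => hterm x]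
      simp
    have hsa : ∀ f g : H, ⟪P₀ f, g⟫ = ⟪f, P₀ g⟫ := by
      intro f g
      rw [hP₀]
      simp only [ContinuousLinearMap.sub_apply, ContinuousLinearMap.one_apply,
        ContinuousLinearMap.sum_apply]
      rw [inner_sub_left, inner_sub_right, sum_inner, inner_sum]
      rw [Finset.sum_congr rfl fun j _ => hPsa j f g]
    calc ⟪P₀ p, p⟫ = ⟪P₀ (P₀ p), p⟫ := by rw [hidem]
      _ = ⟪P₀ p, P₀ p⟫ := hsa _ _
      _ = (‖P₀ p‖ : ℂ) ^ 2 := by rw [inner_self_eq_norm_sq_to_K]; norm_cast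
  have hnp : ‖P₀ p‖ ≠ 0 := norm_ne_zero_iff.mpr hp
  -- continuity of v ↦ Re⟪v,p⟫ / ‖v‖ at P₀ p
  have hF : Tendsto (fun v : H => (⟪v, p⟫).re / ‖v‖) (𝓝 (P₀ p)) (𝓝 ‖P₀ p‖) := by
    have h1 : ContinuousAt (fun v : H => (⟪v, p⟫).re / ‖v‖) (P₀ p) := by
      apply ContinuousAt.div
      · exact (Complex.continuous_re.comp (continuous_id.inner continuous_const)).continuousAt
      · exact continuous_norm.continuousAt
      · exact hnp
    have h2 : (⟪P₀ p, p⟫).re / ‖P₀ p‖ = ‖P₀ p‖ := by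
      rw [hP0sa, ← Complex.ofReal_pow, Complex.ofReal_re, sq, mul_div_assoc,
        div_self hnp, mul_one]
    have := h1.tendsto
    rwa [h2] at this
  -- combine
  have hcomp : Tendsto (fun η => (⟪g η, p⟫).re / ‖g η‖) (𝓝[>] (0:ℝ)) (𝓝 ‖P₀ p‖) :=
    hF.comp hgt
  apply hcomp.congr'
  filter_upwards [self_mem_nhdsWithin] with η hη
  have hη : (0:ℝ) < η := hη
  have : g η = (η : ℂ) • u η := (hkey η hη).symm
  rw [this]
  rw [inner_smul_left]
  rw [Complex.conj_ofReal]
  rw [norm_smul]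
  have hre : ((η : ℂ) * ⟪u η, p⟫).re = η * (⟪u η, p⟫).re := by
    simp [Complex.mul_re]
  rw [hre]
  have hnorm : ‖(η : ℂ)‖ = η := by
    simp [abs_of_pos hη]
  rw [hnorm]
  rw [mul_div_mul_left _ _ hη.ne']
end

section
/- Let H be a Hilbert space, p₁,...,pₙ, p ∈ H, and define K f = ∑ⱼ (f, pⱼ) pⱼ. Suppose μ, ν > 0 and f = (μ + νK)⁻¹ p satisfies ‖f‖ = 1 and (Kf, f) = ε². Then for every g ∈ H with ‖g‖ ≤ 1 and (Kg, g) ≤ ε², one has Re(g, p) ≤ Re(f, p) = (f, p); i.e., f maximizes Re(·, p) subject to the two constraints. -/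
local notation "⟪" x ", " y "⟫" => @inner ℂ _ _ x y

/-- If `f = (μ+νK)⁻¹p` (with `μ,ν > 0`) satisfies the equality
constraints `‖f‖ = 1` and `(Kf,f) = ε²`, then `f` maximizes `Re(·,p)` among all `g` with
`‖g‖ ≤ 1` and `(Kg,g) ≤ ε²`; moreover `(f,p)` is real. -/
theorem stmt18 {H : Type*} [NormedAddCommGroup H] [InnerProductSpace ℂ H] [CompleteSpace H]
    (n : ℕ) (p' : Fin n → H) (p : H) (K : H →L[ℂ] H)
    (hK : ∀ f, K f = ∑ j, ⟪p' j, f⟫ • p' j)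
    (μ ν : ℝ) (hμ : 0 < μ) (hν : 0 < ν) (ε : ℝ) (hε : 0 < ε)
    (f : H) (hf : (μ : ℂ) • f + (ν : ℂ) • K f = p)
    (hnorm : ‖f‖ = 1) (hquad : (⟪f, K f⟫).re = ε ^ 2) :
    (∀ g : H, ‖g‖ ≤ 1 → (⟪g, K g⟫).re ≤ ε ^ 2 → (⟪p, g⟫).re ≤ (⟪p, f⟫).re) ∧
    (⟪p, f⟫).im = 0 := by
  classical
  -- coefficient vector
  set v : H → EuclideanSpace ℂ (Fin n) := fun g => WithLp.toLp 2 (fun j => ⟪p' j, g⟫) with hv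
  have hquad' : ∀ g : H, (⟪g, K g⟫).re = ∑ j, ‖(⟪p' j, g⟫ : ℂ)‖ ^ 2 := by
    intro g
    rw [hK, inner_sum, Complex.re_sum]
    refine Finset.sum_congr rfl fun j _ => ?_
    rw [inner_smul_right, ← inner_conj_symm (p' j) g, RCLike.conj_mul]
    rw [RCLike.norm_conj]
    norm_cast
  have hnormv : ∀ g : H, ‖v g‖ ^ 2 = (⟪g, K g⟫).re := by
    intro g
    rw [hquad', EuclideanSpace.norm_eq, Real.sq_sqrt]
    positivity
  have hKfg : ∀ g : H, (⟪K f, g⟫ : ℂ) = @inner ℂ _ _ (v f) (v g) := by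
    intro g
    rw [hK, sum_inner, PiLp.inner_apply]
    simp [inner_smul_left, hv, RCLike.inner_apply, mul_comm]
  have hvf : ‖v f‖ = ε := by
    have h := hnormv f
    rw [hquad] at h
    nlinarith [norm_nonneg (v f)]
  have hpg : ∀ g : H, (⟪p, g⟫ : ℂ) = (μ : ℂ) * ⟪f, g⟫ + (ν : ℂ) * ⟪K f, g⟫ := by
    intro g
    rw [← hf, inner_add_left, inner_smul_left, inner_smul_left]
    simp [Complex.conj_ofReal]
  constructor
  · intro g hg1 hg2
    have h1 : (⟪f, g⟫ : ℂ).re ≤ 1 := by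
      calc (⟪f, g⟫ : ℂ).re ≤ ‖f‖ * ‖g‖ := by
            have := re_inner_le_norm (𝕜 := ℂ) f g; simpa using this
        _ ≤ 1 := by rw [hnorm]; simpa using hg1
    have h2 : (⟪K f, g⟫ : ℂ).re ≤ ε ^ 2 := by
      rw [hKfg]
      calc (@inner ℂ _ _ (v f) (v g)).re ≤ ‖v f‖ * ‖v g‖ := by
            have := re_inner_le_norm (𝕜 := ℂ) (v f) (v g); simpa using this
        _ ≤ ε * ε := by
            apply mul_le_mul (le_of_eq hvf) _ (norm_nonneg _) (le_of_lt hε)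
            nlinarith [hnormv g, norm_nonneg (v g)]
        _ = ε ^ 2 := by ring
    have hf1 : (⟪f, f⟫ : ℂ).re = 1 := by
      rw [inner_self_eq_norm_sq_to_K (𝕜 := ℂ) f]
      simp [hnorm]
    have hKff : (⟪K f, f⟫ : ℂ).re = ε ^ 2 := by
      rw [show (⟪K f, f⟫ : ℂ) = (starRingEnd ℂ) ⟪f, K f⟫ from (inner_conj_symm _ _).symm,
        Complex.conj_re]
      exact hquad
    rw [hpg g, hpg f]
    simp only [Complex.add_re, Complex.mul_re, Complex.ofReal_re, Complex.ofReal_im,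
      zero_mul, sub_zero]
    nlinarith [h1, h2, hf1, hKff]
  · have hKffim : (⟪K f, f⟫ : ℂ).im = 0 := by
      have : (⟪K f, f⟫ : ℂ) = @inner ℂ _ _ (v f) (v f) := hKfg f
      rw [this]
      have := inner_self_im (𝕜 := ℂ) (v f); simpa using this
    have hffim : (⟪f, f⟫ : ℂ).im = 0 := by
      rw [inner_self_eq_norm_sq_to_K (𝕜 := ℂ) f]; norm_cast
    rw [hpg f]
    simp [Complex.add_im, Complex.mul_im, hKffim, hffim, hnorm]
end

section
/- Let H be a Hilbert space, K a bounded self-adjoint positive semidefinite operator on H, p ∈ H, η > 0, and u = (K + η)⁻¹ p. Suppose (Ku, u)/‖u‖² = ε². Then sup{ Re(f, p) : ‖f‖ ≤ 1, (Kf, f) ≤ ε² } = (u, p)/‖u‖ = (ε² + η)‖u‖. -/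
local notation "⟪" x ", " y "⟫" => @inner ℂ _ _ x y

/-- With `u = (K+η)⁻¹p` and `ε² = (Ku,u)/‖u‖²`,
`sup{Re(f,p) : ‖f‖ ≤ 1, (Kf,f) ≤ ε²} = (u,p)/‖u‖ = (ε²+η)‖u‖`,
the supremum being attained (at `u/‖u‖`). -/
theorem stmt19 {H : Type*} [NormedAddCommGroup H] [InnerProductSpace ℂ H] [CompleteSpace H]
    (K : H →L[ℂ] H)
    (hsa : ∀ f g, ⟪K f, g⟫ = ⟪f, K g⟫) (hpsd : ∀ f, 0 ≤ (⟪f, K f⟫).re)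
    (p : H) (η : ℝ) (hη : 0 < η) (u : H) (hu0 : u ≠ 0)
    (hu : K u + (η : ℂ) • u = p)
    (ε : ℝ) (hε : 0 ≤ ε) (hε2 : ε ^ 2 = (⟪u, K u⟫).re / ‖u‖ ^ 2) :
    IsGreatest {r : ℝ | ∃ f : H, ‖f‖ ≤ 1 ∧ (⟪f, K f⟫).re ≤ ε ^ 2 ∧ r = (⟪p, f⟫).re}
      ((⟪u, p⟫).re / ‖u‖) ∧
    (⟪u, p⟫).re / ‖u‖ = (ε ^ 2 + η) * ‖u‖ := by
  have hN : 0 < ‖u‖ := norm_pos_iff.mpr hu0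
  have ha : (⟪u, K u⟫).re = ε ^ 2 * ‖u‖ ^ 2 := by
    field_simp at hε2
    linarith
  have huu : ⟪u, u⟫ = ((‖u‖ : ℂ) ^ 2) := by
    rw [inner_self_eq_norm_sq_to_K]
    norm_cast
  -- the value equality
  have hup : (⟪u, p⟫).re = (ε ^ 2 + η) * ‖u‖ ^ 2 := by
    have h1 : ⟪u, p⟫ = ⟪u, K u⟫ + (η : ℂ) * ⟪u, u⟫ := by
      rw [← hu, inner_add_right, inner_smul_right]
    rw [h1, huu]
    push_cast
    simp [Complex.add_re, Complex.mul_re, ha, ← Complex.ofReal_pow]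
    ring
  have hval : (⟪u, p⟫).re / ‖u‖ = (ε ^ 2 + η) * ‖u‖ := by
    rw [hup]; field_simp
  -- key Cauchy–Schwarz-type bound
  have key : ∀ f : H, (⟪f, K f⟫).re ≤ ε ^ 2 → (⟪u, K f⟫).re ≤ ε ^ 2 * ‖u‖ := by
    intro f hc
    have hsym : (⟪f, K u⟫).re = (⟪u, K f⟫).re := by
      rw [← hsa, ← inner_conj_symm (K f) u, Complex.conj_re]
    have h0 : 0 ≤ (⟪u - (‖u‖ : ℂ) • f, K (u - (‖u‖ : ℂ) • f)⟫).re := hpsd _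
    have hexp : (⟪u - (‖u‖ : ℂ) • f, K (u - (‖u‖ : ℂ) • f)⟫).re
        = (⟪u, K u⟫).re - ‖u‖ * (⟪u, K f⟫).re - ‖u‖ * (⟪f, K u⟫).re
          + ‖u‖ ^ 2 * (⟪f, K f⟫).re := by
      rw [map_sub, map_smul, inner_sub_left, inner_sub_right, inner_sub_right,
        inner_smul_left, inner_smul_right, inner_smul_left, inner_smul_right]
      simp [Complex.sub_re, Complex.add_re, Complex.mul_re, Complex.conj_ofReal]
      ring
    rw [hexp, hsym, ha] at h0
    nlinarith [sq_nonneg ‖u‖, hN, mul_le_mul_of_nonneg_left hc (sq_nonneg ‖u‖)]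
  constructor
  · constructor
    · -- membership: f = u / ‖u‖
      refine ⟨((‖u‖ : ℂ))⁻¹ • u, ?_, ?_, ?_⟩
      · rw [norm_smul]
        simp [hN.ne']
      · rw [map_smul, inner_smul_left, inner_smul_right]
        have : (starRingEnd ℂ) ((‖u‖ : ℂ))⁻¹ * ((((‖u‖:ℂ))⁻¹) * ⟪u, K u⟫)
            = ((‖u‖ : ℂ) ^ 2)⁻¹ * ⟪u, K u⟫ := by
          rw [← Complex.ofReal_inv, Complex.conj_ofReal]
          push_cast
          ring
        rw [this]
        have h2 : (((‖u‖ : ℂ) ^ 2)⁻¹ * ⟪u, K u⟫).re = (‖u‖ ^ 2)⁻¹ * (⟪u, K u⟫).re := by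
          rw [← Complex.ofReal_pow, ← Complex.ofReal_inv, Complex.re_ofReal_mul]
        rw [h2, ha]
        field_simp
        exact le_refl _
      · rw [inner_smul_right]
        have : ((((‖u‖:ℂ))⁻¹) * ⟪p, u⟫).re = (‖u‖)⁻¹ * (⟪p, u⟫).re := by
          rw [← Complex.ofReal_inv, Complex.re_ofReal_mul]
        rw [this]
        have hpu : (⟪p, u⟫).re = (⟪u, p⟫).re := by
          rw [← inner_conj_symm p u, Complex.conj_re]
        rw [hpu]
        field_simp
    · -- upper bound
      rintro r ⟨f, hf1, hf2, rfl⟩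
      rw [hval]
      have h1 : ⟪p, f⟫ = ⟪u, K f⟫ + (η : ℂ) * ⟪u, f⟫ := by
        rw [← hu, inner_add_left, inner_smul_left, hsa, Complex.conj_ofReal]
      have h2 : (⟪p, f⟫).re = (⟪u, K f⟫).re + η * (⟪u, f⟫).re := by
        rw [h1]
        simp [Complex.add_re, Complex.mul_re]
      have h3 : (⟪u, f⟫).re ≤ ‖u‖ := by
        calc (⟪u, f⟫).re ≤ ‖⟪u, f⟫‖ := Complex.re_le_norm _
          _ ≤ ‖u‖ * ‖f‖ := norm_inner_le_norm _ _
          _ ≤ ‖u‖ * 1 := by nlinarith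
          _ = ‖u‖ := mul_one _
      have h4 := key f hf2
      rw [h2]
      nlinarith
  · exact hval
end
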